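/- arXiv:2406.17122 — 4 statements merged into one kernel-verified Lean document; each statement's English description precedes it below -/
import Mathlib

section
/- Let $R$ be a Noetherian commutative ring, $J \subseteq R$ an ideal, $S \subseteq R$ a multiplicative set, and $h \in R$ an element such that the contraction of $S^{-1}J$ to $R$ equals the saturation $(J : h^\infty)$. Then every associated prime $P$ of $J$ with $P \cap S \neq \emptyset$ contains $h$. -/
/-- The saturation `(J : h^∞) = {f : R | h^k f ∈ J for some k ≥ 0}` of an ideal `J` by an
element `h`. -/
def satIdeal {R : Type*} [CommRing R] (J : Ideal R) (h : R) : Ideal R where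
  carrier := {f | ∃ k : ℕ, h ^ k * f ∈ J}
  zero_mem' := ⟨0, by simp⟩
  add_mem' := by
    rintro a b ⟨k, hk⟩ ⟨l, hl⟩
    refine ⟨k + l, ?_⟩
    have h1 := J.add_mem (J.mul_mem_left (h ^ l) hk) (J.mul_mem_left (h ^ k) hl)
    convert h1 using 1
    ring
  smul_mem' := by
    rintro c a ⟨k, hk⟩
    refine ⟨k, ?_⟩
    have h1 := J.mul_mem_left c hk
    convert h1 using 1
    simp [smul_eq_mul]
    ring

/-- Let `R` be a Noetherian commutative ring, `J ⊆ R` an ideal, `S ⊆ R` a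
multiplicative set and `h ∈ R` an element such that the contraction of `S⁻¹J` to `R` equals
the saturation `(J : h^∞)`. Then every associated prime `P` of `J` with `P ∩ S ≠ ∅`
contains `h`. -/
theorem mem_associatedPrime_of_meets_of_contraction_eq_saturation
    {R : Type*} [CommRing R] [IsNoetherianRing R] (J : Ideal R) (S : Submonoid R) (h : R)
    (hsat : Ideal.comap (algebraMap R (Localization S))
        (Ideal.map (algebraMap R (Localization S)) J) = satIdeal J h) :
    ∀ P ∈ associatedPrimes R (R ⧸ J), (∃ s ∈ S, s ∈ P) → h ∈ P := by
  intro P hPmem hsP'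
  obtain ⟨hP, m, rfl⟩ := isAssociatedPrime_iff.mp hPmem
  obtain ⟨s, hsS, hsP⟩ := hsP'
  obtain ⟨x, rfl⟩ := Ideal.Quotient.mk_surjective m
  rw [Submodule.mem_colon_singleton, Submodule.mem_bot, Algebra.smul_def] at hsP
  have hsx : s * x ∈ J := by
    rw [← Ideal.Quotient.eq_zero_iff_mem]
    simpa [smul_eq_mul] using hsP
  have hx : x ∈ satIdeal J h := by
    rw [← hsat]
    show algebraMap R (Localization S) x ∈ Ideal.map (algebraMap R (Localization S)) J
    have h1 : algebraMap R (Localization S) (s * x) ∈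
        Ideal.map (algebraMap R (Localization S)) J := Ideal.mem_map_of_mem _ hsx
    obtain ⟨u, hu⟩ := IsLocalization.map_units (Localization S) (⟨s, hsS⟩ : S)
    have h2 := (Ideal.map (algebraMap R (Localization S)) J).mul_mem_left (↑u⁻¹) h1
    have h3 : (↑u⁻¹ : Localization S) * algebraMap R (Localization S) (s * x)
        = algebraMap R (Localization S) x := by
      rw [map_mul, ← hu, ← mul_assoc, Units.inv_mul, one_mul]
    rwa [h3] at h2
  obtain ⟨k, hk⟩ := hx
  have hpk : h ^ k ∈ (⊥ : Submodule R (R ⧸ J)).colon {Ideal.Quotient.mk J x} := by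
    rw [Submodule.mem_colon_singleton, Submodule.mem_bot]
    show Ideal.Quotient.mk J (h ^ k * x) = 0
    rw [Ideal.Quotient.eq_zero_iff_mem]
    exact hk
  exact hP.mem_of_pow_mem k hpk
end

section
/- Let $Y \subseteq \mathbb{C}^n$ be an affine algebraic variety with vanishing ideal $I(Y) \subseteq \mathbb{C}[x_1,\dots,x_n]$, let $u$ be a maximally independent subset of variables for $I(Y)$ (so $|u| = \dim Y$ and $\mathbb{C}[u] \to \mathbb{C}[x]/I(Y)$ is injective), and let $h \in \mathbb{C}[u]$ be a nonzero polynomial such that $(I(Y) : h^\infty) = I(Y)\mathbb{C}(u)[x\setminus u] \cap \mathbb{C}[x]$. Then the Zariski closure of $Y \setminus V(h)$ is equidimensional of dimension $\dim(Y)$, i.e., every minimal prime over $(I(Y):h^\infty)$ defines a variety of dimension exactly $\dim(Y)$. -/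
open MvPolynomial

lemma mem_satIdeal' {R : Type*} [CommRing R] {J : Ideal R} {h f : R} :
    f ∈ satIdeal J h ↔ ∃ k : ℕ, h ^ k * f ∈ J := Iff.rfl

/-- Every element of a minimal prime over `J` is "almost nilpotent" modulo `J`. -/
lemma exists_pow_mul_mem_of_mem_minimalPrimes' {R : Type*} [CommRing R] {J P : Ideal R}
    (hP : P ∈ J.minimalPrimes) {x : R} (hx : x ∈ P) :
    ∃ (y : R) (k : ℕ), y ∉ P ∧ x ^ k * y ∈ J := by
  haveI hPp : P.IsPrime := hP.1.1
  by_contra hcon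
  push_neg at hcon
  have hone : (1 : R) ∉ P := fun h1 => hPp.ne_top ((Ideal.eq_top_iff_one P).mpr h1)
  let M : Submonoid R :=
    { carrier := {z | ∃ k y, y ∉ P ∧ z = x ^ k * y}
      one_mem' := ⟨0, 1, hone, by ring⟩
      mul_mem' := by
        rintro a b ⟨k, y, hy, rfl⟩ ⟨l, z, hz, rfl⟩
        exact ⟨k + l, y * z, fun hyz => ((hPp.mem_or_mem hyz).elim hy hz), by ring⟩ }
  have hdisj : Disjoint (J : Set R) (M : Set R) := by
    rw [Set.disjoint_left]
    rintro z hzJ ⟨k, y, hy, rfl⟩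
    exact hcon y k hy hzJ
  obtain ⟨Q, hQp, hJQ, hQdisj⟩ := Ideal.exists_le_prime_disjoint J M hdisj
  have hQP : Q ≤ P := by
    intro z hz
    by_contra hzP
    exact Set.disjoint_left.mp hQdisj hz ⟨0, z, hzP, by ring⟩
  have hPQ : P ≤ Q := hP.2 ⟨hQp, hJQ⟩ hQP
  exact Set.disjoint_left.mp hQdisj (hPQ hx) ⟨1, 1, hone, by ring⟩

open Polynomial in
/-- A finitely generated domain over a field `K` containing a polynomial ring in `d`
variables has a chain of primes of length `d`. -/
lemma exists_ltSeries_of_injective {K : Type v} [Field K] :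
    ∀ (d : ℕ) (B : Type u) [CommRing B] [IsDomain B] [Algebra K B] [Algebra.FiniteType K B]
      (φ : MvPolynomial (Fin d) K →ₐ[K] B), Function.Injective φ →
      ∃ c : LTSeries (PrimeSpectrum B), c.length = d := by
  intro d
  induction d with
  | zero =>
    intro B _ _ _ _ φ _
    exact ⟨RelSeries.singleton _ ⟨⊥, Ideal.bot_prime⟩, rfl⟩
  | succ e ih =>
    intro B _ _ _ _ φ hφ
    classical
    set A' := MvPolynomial (Fin e) K with hA'
    let ι : A' →ₐ[K] MvPolynomial (Fin (e + 1)) K := rename Fin.succ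
    let ψ : A' →ₐ[K] B := φ.comp ι
    have hψ : Function.Injective ψ :=
      hφ.comp (rename_injective _ (Fin.succ_injective e))
    let T : Submonoid B := Submonoid.map ψ.toRingHom.toMonoidHom (nonZeroDivisors A')
    have hTle : T ≤ nonZeroDivisors B := by
      rintro _ ⟨a, ha, rfl⟩
      refine mem_nonZeroDivisors_of_ne_zero fun h0 => ?_
      exact mem_nonZeroDivisors_iff_ne_zero.mp ha
        ((injective_iff_map_eq_zero ψ).mp hψ a h0)
    haveI : IsDomain (Localization T) := IsLocalization.isDomain_localization hTle
    have hinjB : Function.Injective (algebraMap B (Localization T)) :=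
      IsLocalization.injective _ hTle
    set t1 : B := φ (MvPolynomial.X 0) with ht1
    -- the localization is not a field
    have hnf : ¬ IsField (Localization T) := by
      intro hf
      letI : Field (Localization T) := hf.toField
      set L := FractionRing A' with hL
      have hunits : ∀ y : nonZeroDivisors A',
          IsUnit (((algebraMap B (Localization T)).comp ψ.toRingHom) y) := fun y =>
        IsLocalization.map_units (Localization T) (⟨ψ y, Submonoid.mem_map.mpr ⟨y, y.2, rfl⟩⟩ : T)
      letI : Algebra A' (Localization T) :=
        ((algebraMap B (Localization T)).comp ψ.toRingHom).toAlgebra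
      letI : Algebra L (Localization T) := (IsLocalization.lift hunits).toAlgebra
      haveI : IsScalarTower A' L (Localization T) :=
        IsScalarTower.of_algebraMap_eq fun a => (IsLocalization.lift_eq hunits a).symm
      obtain ⟨s, hs⟩ := (inferInstance : Algebra.FiniteType K B).out
      have hmem : ∀ b : B, algebraMap B (Localization T) b ∈
          Algebra.adjoin L (algebraMap B (Localization T) '' ↑s) := by
        intro b
        have hb : b ∈ Algebra.adjoin K (↑s : Set B) := by rw [hs]; trivial
        induction hb using Algebra.adjoin_induction with
        | mem x hx => exact Algebra.subset_adjoin ⟨x, hx, rfl⟩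
        | algebraMap r =>
          have h1 : (algebraMap K B) r = ψ (MvPolynomial.C r) := by
            rw [show (MvPolynomial.C r : A') = algebraMap K A' r from rfl, ψ.commutes r]
          rw [h1]
          have h2 : algebraMap B (Localization T) (ψ (MvPolynomial.C r)) =
              algebraMap L (Localization T) (algebraMap A' L (MvPolynomial.C r)) :=
            IsScalarTower.algebraMap_apply A' L (Localization T) (MvPolynomial.C r)
          rw [h2]
          exact Subalgebra.algebraMap_mem _ _
        | add x y hx hy ihx ihy => rw [map_add]; exact add_mem ihx ihy
        | mul x y hx hy ihx ihy => rw [map_mul]; exact mul_mem ihx ihy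
      have htop : Algebra.adjoin L (algebraMap B (Localization T) '' ↑s) = ⊤ := by
        rw [eq_top_iff]
        rintro x -
        obtain ⟨⟨b, t⟩, hx⟩ := IsLocalization.surj (M := T) x
        obtain ⟨a, haA, hat⟩ := Submonoid.mem_map.mp t.2
        have ha0 : algebraMap A' L a ≠ 0 := fun h0 =>
          mem_nonZeroDivisors_iff_ne_zero.mp haA
            ((IsFractionRing.injective A' L) (h0.trans (map_zero _).symm))
        have hinv : algebraMap L (Localization T) (algebraMap A' L a) *
            algebraMap L (Localization T) (algebraMap A' L a)⁻¹ = 1 := by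
          rw [← map_mul, mul_inv_cancel₀ ha0, map_one]
        have ht' : (algebraMap B (Localization T)) (t : B) =
            algebraMap L (Localization T) (algebraMap A' L a) := by
          rw [← hat]
          exact IsScalarTower.algebraMap_apply A' L (Localization T) a
        have hx' : x = algebraMap B (Localization T) b *
            algebraMap L (Localization T) (algebraMap A' L a)⁻¹ := by
          calc x = x * (algebraMap L (Localization T) (algebraMap A' L a) *
                algebraMap L (Localization T) (algebraMap A' L a)⁻¹) := by rw [hinv, mul_one]
            _ = (x * algebraMap B (Localization T) (t : B)) *
                algebraMap L (Localization T) (algebraMap A' L a)⁻¹ := by rw [ht']; ring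
            _ = _ := by rw [hx]
        rw [hx']
        exact mul_mem (hmem b) (Subalgebra.algebraMap_mem _ _)
      haveI : Algebra.FiniteType L (Localization T) :=
        ⟨⟨s.image (algebraMap B (Localization T)), by rw [Finset.coe_image]; exact htop⟩⟩
      obtain ⟨m, g, hgsurj⟩ := Algebra.FiniteType.iff_quotient_mvPolynomial''.mp
        (inferInstance : Algebra.FiniteType L (Localization T))
      have hint := MvPolynomial.comp_C_integral_of_surjective_of_isJacobsonRing
        g.toRingHom hgsurj
      have hC : g.toRingHom.comp MvPolynomial.C = algebraMap L (Localization T) := by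
        ext l
        show g (MvPolynomial.C l) = algebraMap L (Localization T) l
        rw [show (MvPolynomial.C l : MvPolynomial (Fin m) L) = algebraMap L _ l from rfl]
        exact g.commutes l
      rw [hC] at hint
      have hIntEl : IsIntegral L (algebraMap B (Localization T) t1) := hint _
      have hAlgL : IsAlgebraic L (algebraMap B (Localization T) t1) := hIntEl.isAlgebraic
      have hAlgA : IsAlgebraic A' (algebraMap B (Localization T) t1) :=
        (IsFractionRing.isAlgebraic_iff A' L (Localization T)).mpr hAlgL
      obtain ⟨p, hp0, hpe⟩ := hAlgA
      have h2 : Polynomial.eval₂ ψ.toRingHom t1 p = 0 := by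
        apply hinjB
        rw [map_zero, Polynomial.hom_eval₂]
        exact hpe
      have h4 : Polynomial.eval₂ ι.toRingHom (MvPolynomial.X 0) p = 0 := by
        apply hφ
        rw [map_zero]
        exact (Polynomial.hom_eval₂ p ι.toRingHom φ.toRingHom (MvPolynomial.X 0)).trans h2
      let τ : MvPolynomial (Fin (e + 1)) K →ₐ[K] Polynomial A' :=
        aeval (fun i => Fin.cases Polynomial.X (fun j => Polynomial.C (MvPolynomial.X j)) i)
      have hτι : τ.toRingHom.comp ι.toRingHom = (Polynomial.C : A' →+* Polynomial A') := by
        apply MvPolynomial.ringHom_ext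
        · intro r
          show τ (ι (MvPolynomial.C r)) = Polynomial.C (MvPolynomial.C r)
          rw [show ι (MvPolynomial.C r) = MvPolynomial.C r from MvPolynomial.rename_C _ _]
          show (MvPolynomial.aeval _) (MvPolynomial.C r) = _
          rw [MvPolynomial.aeval_C]
          simp [Polynomial.algebraMap_apply, MvPolynomial.algebraMap_eq]
          rfl
        · intro i
          show τ (ι (MvPolynomial.X i)) = Polynomial.C (MvPolynomial.X i)
          rw [show ι (MvPolynomial.X i) = MvPolynomial.X i.succ from MvPolynomial.rename_X _ _]
          show (MvPolynomial.aeval _) (MvPolynomial.X i.succ) = _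
          rw [MvPolynomial.aeval_X]
          simp
      have h5 : τ.toRingHom (Polynomial.eval₂ ι.toRingHom (MvPolynomial.X 0) p) =
          Polynomial.eval₂ (τ.toRingHom.comp ι.toRingHom)
            (τ.toRingHom (MvPolynomial.X 0)) p := Polynomial.hom_eval₂ _ _ _ _
      rw [h4, map_zero, hτι] at h5
      have hτX : τ.toRingHom (MvPolynomial.X (0 : Fin (e + 1))) = Polynomial.X := by
        show (MvPolynomial.aeval _) (MvPolynomial.X (0 : Fin (e + 1))) = _
        rw [MvPolynomial.aeval_X, Fin.cases_zero]
      rw [hτX, Polynomial.eval₂_C_X] at h5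
      exact hp0 h5.symm
    obtain ⟨Q', hQ'ne, hQ'p⟩ := Ring.not_isField_iff_exists_prime.mp hnf
    haveI := hQ'p
    set Q1 : Ideal B := Q'.comap (algebraMap B (Localization T)) with hQ1
    haveI hQ1p : Q1.IsPrime := Ideal.IsPrime.comap _
    have hQ1ne : Q1 ≠ ⊥ := by
      obtain ⟨q, hqQ, hq0⟩ := (Submodule.ne_bot_iff _).mp hQ'ne
      obtain ⟨⟨b, t⟩, hbt⟩ := IsLocalization.surj (M := T) q
      have hbQ : b ∈ Q1 := by
        show algebraMap B (Localization T) b ∈ Q'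
        rw [← hbt]
        exact Q'.mul_mem_right _ hqQ
      have hb0 : b ≠ 0 := by
        rintro rfl
        rw [map_zero] at hbt
        have hu := IsLocalization.map_units (Localization T) t
        exact hq0 ((IsUnit.mul_left_eq_zero hu).mp hbt)
      exact fun hbot => hb0 (by rwa [hbot, Ideal.mem_bot] at hbQ)
    have hdisj : ∀ a : A', ψ a ∈ Q1 → a = 0 := by
      intro a ha
      by_contra h0
      have hmemT : ψ a ∈ T := ⟨a, mem_nonZeroDivisors_of_ne_zero h0, rfl⟩
      have hu := IsLocalization.map_units (Localization T) (⟨ψ a, hmemT⟩ : T)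
      exact hQ'p.ne_top (Q'.eq_top_of_isUnit_mem ha hu)
    haveI : Algebra.FiniteType K (B ⧸ Q1) :=
      Algebra.FiniteType.of_surjective (Ideal.Quotient.mkₐ K Q1)
        (Ideal.Quotient.mkₐ_surjective K Q1)
    let ψ' : A' →ₐ[K] B ⧸ Q1 := (Ideal.Quotient.mkₐ K Q1).comp ψ
    have hψ' : Function.Injective ψ' := by
      rw [injective_iff_map_eq_zero]
      intro a ha
      exact hdisj a (Ideal.Quotient.eq_zero_iff_mem.mp ha)
    obtain ⟨c', hc'⟩ := ih (B ⧸ Q1) ψ' hψ'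
    have hcomapinj : Function.Injective
        (Ideal.comap (Ideal.Quotient.mk Q1) : Ideal (B ⧸ Q1) → Ideal B) :=
      Function.LeftInverse.injective fun Jq =>
        Ideal.map_comap_of_surjective _ Ideal.Quotient.mk_surjective Jq
    let emb : PrimeSpectrum (B ⧸ Q1) → PrimeSpectrum B := fun q =>
      ⟨q.asIdeal.comap (Ideal.Quotient.mk Q1), Ideal.IsPrime.comap _⟩
    have hst : StrictMono emb := by
      intro q q' hlt
      rw [← PrimeSpectrum.asIdeal_lt_asIdeal] at hlt ⊢
      refine lt_of_le_of_ne (Ideal.comap_mono hlt.le) fun heq => hlt.ne (hcomapinj heq)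
    refine ⟨(c'.map emb hst).cons ⟨⊥, Ideal.bot_prime⟩ ?_, ?_⟩
    · rw [LTSeries.head_map]
      show (_ : PrimeSpectrum B) < _; rw [← PrimeSpectrum.asIdeal_lt_asIdeal]
      refine lt_of_lt_of_le hQ1ne.bot_lt ?_
      intro z hz
      show z ∈ (RelSeries.head c').asIdeal.comap (Ideal.Quotient.mk Q1)
      rw [Ideal.mem_comap, Ideal.Quotient.eq_zero_iff_mem.mpr hz]
      exact zero_mem _
    · rw [RelSeries.cons_length]
      rw [show (c'.map emb hst).length = c'.length from rfl, hc']

lemma cast_le_ringKrullDim_of_injective {K : Type v} [Field K] {d : ℕ} (B : Type u)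
    [CommRing B] [IsDomain B] [Algebra K B] [Algebra.FiniteType K B]
    (φ : MvPolynomial (Fin d) K →ₐ[K] B) (hφ : Function.Injective φ) :
    (d : WithBot ℕ∞) ≤ ringKrullDim B := by
  obtain ⟨c, hc⟩ := exists_ltSeries_of_injective d B φ hφ
  have := Order.LTSeries.length_le_krullDim c
  rw [hc] at this
  exact this

/-- Let `Y ⊆ ℂⁿ` be an affine algebraic variety with vanishing ideal `I(Y)`,
let `u` be a maximally independent subset of the variables for `I(Y)` (so `ℂ[u] → ℂ[x]/I(Y)`
is injective and `|u| = dim Y`), and let `0 ≠ h ∈ ℂ[u]` be such that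
`(I(Y) : h^∞) = I(Y)·ℂ(u)[x∖u] ∩ ℂ[x]`.  Then the Zariski closure of `Y ∖ V(h)` is
equidimensional of dimension `dim Y`: every minimal prime over `(I(Y) : h^∞)` defines a
variety of dimension exactly `dim Y`. -/
theorem saturation_equidimensional
    {n : ℕ} (Y : Set (Fin n → ℂ)) (hY : zeroLocus ℂ (vanishingIdeal ℂ Y) = Y)
    (u : Finset (Fin n)) (h : MvPolynomial {i // i ∈ u} ℂ) (hh : h ≠ 0) :
    let ρ : MvPolynomial {i // i ∈ u} ℂ →+* MvPolynomial (Fin n) ℂ :=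
      (rename (fun i : {i // i ∈ u} => (i : Fin n)) :
        MvPolynomial {i // i ∈ u} ℂ →ₐ[ℂ] MvPolynomial (Fin n) ℂ).toRingHom
    let S : Submonoid (MvPolynomial (Fin n) ℂ) :=
      Submonoid.map ρ.toMonoidHom (nonZeroDivisors (MvPolynomial {i // i ∈ u} ℂ))
    -- `u` is a maximally independent subset of variables for `I(Y)`
    (∀ g : MvPolynomial {i // i ∈ u} ℂ, ρ g ∈ vanishingIdeal ℂ Y → g = 0) →
    (u.card : WithBot ℕ∞) = ringKrullDim (MvPolynomial (Fin n) ℂ ⧸ vanishingIdeal ℂ Y) →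
    -- the saturation coincides with the extension–contraction along `ℂ[x] → ℂ(u)[x∖u]`
    satIdeal (vanishingIdeal ℂ Y) (ρ h) =
      Ideal.comap (algebraMap (MvPolynomial (Fin n) ℂ) (Localization S))
        (Ideal.map (algebraMap (MvPolynomial (Fin n) ℂ) (Localization S)) (vanishingIdeal ℂ Y)) →
    ∀ P ∈ (satIdeal (vanishingIdeal ℂ Y) (ρ h)).minimalPrimes,
      ringKrullDim (MvPolynomial (Fin n) ℂ ⧸ P) =
        ringKrullDim (MvPolynomial (Fin n) ℂ ⧸ vanishingIdeal ℂ Y) := by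
  intro ρ S hinj hcard hsat P hP
  haveI hPp : P.IsPrime := hP.1.1
  set I : Ideal (MvPolynomial (Fin n) ℂ) := vanishingIdeal ℂ Y with hI
  have hIJ : I ≤ satIdeal I (ρ h) := fun f hf => ⟨0, by simpa using hf⟩
  have hJP : satIdeal I (ρ h) ≤ P := hP.1.2
  -- P intersects ρ(ℂ[u]) trivially
  have hPdisj : ∀ g : MvPolynomial {i // i ∈ u} ℂ, ρ g ∈ P → g = 0 := by
    intro g hg
    by_contra hg0
    obtain ⟨y, k, hyP, hyJ⟩ := exists_pow_mul_mem_of_mem_minimalPrimes' hP hg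
    have hyJ' : y ∈ satIdeal I (ρ h) := by
      rw [hsat] at hyJ ⊢
      rw [Ideal.mem_comap] at hyJ ⊢
      have hmemS : (ρ g) ^ k ∈ S := ⟨g ^ k,
        mem_nonZeroDivisors_of_ne_zero (pow_ne_zero _ hg0), by simp [map_pow]⟩
      obtain ⟨v, hv⟩ := IsLocalization.map_units (Localization S)
        (⟨(ρ g) ^ k, hmemS⟩ : S)
      have heq : algebraMap (MvPolynomial (Fin n) ℂ) (Localization S) y =
          ↑v⁻¹ * algebraMap (MvPolynomial (Fin n) ℂ) (Localization S) ((ρ g) ^ k * y) := by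
        rw [map_mul, ← hv, ← mul_assoc, Units.inv_mul, one_mul]
      rw [heq]
      exact Ideal.mul_mem_left _ _ hyJ
    exact hyP (hJP hyJ')
  -- upper bound
  have hupper : ringKrullDim (MvPolynomial (Fin n) ℂ ⧸ P) ≤
      ringKrullDim (MvPolynomial (Fin n) ℂ ⧸ I) := by
    refine ringKrullDim_le_of_surjective (Ideal.Quotient.factor (le_trans hIJ hJP)) ?_
    intro x
    obtain ⟨r, rfl⟩ := Ideal.Quotient.mk_surjective x
    exact ⟨Ideal.Quotient.mk I r, Ideal.Quotient.factor_mk _ _⟩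
  -- lower bound
  let e : Fin u.card ≃ {i // i ∈ u} := u.equivFin.symm
  let φ : MvPolynomial (Fin u.card) ℂ →ₐ[ℂ] (MvPolynomial (Fin n) ℂ ⧸ P) :=
    (Ideal.Quotient.mkₐ ℂ P).comp
      ((rename (fun i : {i // i ∈ u} => (i : Fin n))).comp (rename e))
  have hφ : Function.Injective φ := by
    rw [injective_iff_map_eq_zero]
    intro p hp
    have h1 : ρ (rename e p) ∈ P := by
      have := Ideal.Quotient.eq_zero_iff_mem.mp hp
      exact this
    have h2 : rename (⇑e) p = 0 := hPdisj _ h1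
    exact rename_injective _ e.injective (by rw [h2, map_zero])
  have hlower : (u.card : WithBot ℕ∞) ≤ ringKrullDim (MvPolynomial (Fin n) ℂ ⧸ P) :=
    cast_le_ringKrullDim_of_injective _ φ hφ
  refine le_antisymm hupper ?_
  rw [← hcard]
  exact hlower
end

section
/- Let $I$ be an ideal of $K[x_1,\dots,x_n]$ over a field $K$ and let $u \subseteq \{x_1,\dots,x_n\}$ be such that the composite map $K[u] \to K[x]/I$ is injective. Then the cardinality of $u$ is at most the Krull dimension of $K[x]/I$. -/
set_option maxHeartbeats 1000000


open MvPolynomial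

section Auxiliary

variable {K : Type*} [Field K]

/-- If `g : B →+* A` is injective with `B` a domain, there is a prime of `A` avoiding the
image of all nonzero elements of `B`. -/
lemma exists_prime_avoiding_aux {B A : Type*} [CommRing B] [IsDomain B] [CommRing A]
    (g : B →+* A) (hg : Function.Injective g) :
    ∃ p : Ideal A, p.IsPrime ∧ ∀ b : B, b ≠ 0 → g b ∉ p := by
  set S : Submonoid A := (nonZeroDivisors B).map g with hSdef
  have h0 : ∀ s ∈ S, s ≠ (0 : A) := by
    rintro s ⟨b, hb, rfl⟩ h
    exact mem_nonZeroDivisors_iff_ne_zero.mp hb (hg (h.trans g.map_zero.symm))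
  have hnt : Nontrivial (Localization S) := by
    refine nontrivial_of_ne 0 1 fun h => ?_
    have h1 : algebraMap A (Localization S) 1 = algebraMap A (Localization S) 0 := by
      simp [h.symm]
    obtain ⟨c, hc⟩ := (IsLocalization.eq_iff_exists S (Localization S)).mp h1
    have hc0 : (c : A) = 0 := by simpa using hc
    exact h0 c c.2 hc0
  obtain ⟨M, hM⟩ := Ideal.exists_maximal (Localization S)
  refine ⟨M.comap (algebraMap A (Localization S)), Ideal.IsPrime.comap _ , ?_⟩
  intro b hb hmem
  have hu : IsUnit (algebraMap A (Localization S) (g b)) :=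
    IsLocalization.map_units (Localization S)
      (⟨g b, Submonoid.mem_map_of_mem g (mem_nonZeroDivisors_of_ne_zero hb)⟩ : S)
  exact hM.ne_top (M.eq_top_of_isUnit_mem (Ideal.mem_comap.mp hmem) hu)

lemma finSuccEquiv_rename_succ (m : ℕ) (b : MvPolynomial (Fin m) K) :
    finSuccEquiv K m (rename Fin.succ b) = Polynomial.C b := by
  have h : ((finSuccEquiv K m : MvPolynomial (Fin (m + 1)) K →+*
        Polynomial (MvPolynomial (Fin m) K)).comp
        (rename (Fin.succ : Fin m → Fin (m + 1)) :
          MvPolynomial (Fin m) K →ₐ[K] MvPolynomial (Fin (m + 1)) K).toRingHom) =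
      (Polynomial.C : MvPolynomial (Fin m) K →+* Polynomial (MvPolynomial (Fin m) K)) := by
    apply MvPolynomial.ringHom_ext
    · intro k
      simp [finSuccEquiv_apply]
    · intro i
      simp [finSuccEquiv_X_succ]
  exact RingHom.congr_fun h b

lemma aeval_finSuccEquiv_symm {D : Type*} [CommRing D] [Algebra K D]
    (m : ℕ) (t : Fin (m + 1) → D) (q : Polynomial (MvPolynomial (Fin m) K)) :
    aeval t ((finSuccEquiv K m).symm q) =
      Polynomial.eval₂ (aeval (t ∘ Fin.succ) : MvPolynomial (Fin m) K →ₐ[K] D).toRingHom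
        (t 0) q := by
  have h : ((aeval t : MvPolynomial (Fin (m + 1)) K →ₐ[K] D).toRingHom.comp
        ((finSuccEquiv K m).symm : Polynomial (MvPolynomial (Fin m) K) →+*
          MvPolynomial (Fin (m + 1)) K)) =
      Polynomial.eval₂RingHom
        (aeval (t ∘ Fin.succ) : MvPolynomial (Fin m) K →ₐ[K] D).toRingHom (t 0) := by
    apply Polynomial.ringHom_ext
    · intro b
      have hsymm : (finSuccEquiv K m).symm (Polynomial.C b) = rename Fin.succ b := by
        rw [AlgEquiv.symm_apply_eq, finSuccEquiv_rename_succ]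
      simp only [RingHom.coe_comp, Function.comp_apply, RingHom.coe_coe, AlgHom.coe_toRingHom,
        hsymm, Polynomial.coe_eval₂RingHom, Polynomial.eval₂_C, aeval_rename]
      show aeval t (rename Fin.succ b) = aeval (t ∘ Fin.succ) b
      rw [aeval_rename]
    · have hsymm : (finSuccEquiv K m).symm Polynomial.X = X (0 : Fin (m + 1)) := by
        rw [AlgEquiv.symm_apply_eq, finSuccEquiv_X_zero]
      simp only [RingHom.coe_comp, Function.comp_apply, RingHom.coe_coe, AlgHom.coe_toRingHom,
        hsymm, Polynomial.coe_eval₂RingHom, Polynomial.eval₂_X, aeval_X]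
      show aeval t (X (0 : Fin (m + 1))) = t 0
      rw [aeval_X]
  exact RingHom.congr_fun h q

/-- Key inductive proposition: a finitely generated domain over a field containing `m`
algebraically independent elements has a chain of primes of length `m` starting at `⊥`. -/
theorem exists_prime_chain (K : Type u) [Field K] :
    ∀ (m : ℕ) (D : Type v) [CommRing D] [IsDomain D] [Algebra K D] [Algebra.FiniteType K D]
      (t : Fin m → D), AlgebraicIndependent K t →
      ∃ c : Fin (m + 1) → Ideal D, StrictMono c ∧ (∀ i, (c i).IsPrime) ∧ c 0 = ⊥ := by
  intro m
  induction m with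
  | zero =>
    intro D _ _ _ _ t _
    haveI : Subsingleton (Fin (0 + 1)) := Fin.subsingleton_one
    refine ⟨fun _ => ⊥, fun i j h => absurd (Subsingleton.elim i j ▸ h) (lt_irrefl j),
      fun _ => Ideal.bot_prime, rfl⟩
  | succ m IH =>
    intro D _ _ _ _ t ht
    classical
    set B := MvPolynomial (Fin m) K with hBdef
    set t' : Fin m → D := t ∘ Fin.succ with ht'def
    have ht' : AlgebraicIndependent K t' := ht.comp Fin.succ (Fin.succ_injective m)
    set g : B →ₐ[K] D := aeval t' with hgdef
    have hginj : Function.Injective g := algebraicIndependent_iff_injective_aeval.mp ht'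
    set S : Submonoid D := (nonZeroDivisors B).map g.toRingHom with hSdef
    have hSsub : S ≤ nonZeroDivisors D := by
      rintro s ⟨b, hb, rfl⟩
      refine mem_nonZeroDivisors_of_ne_zero fun h => ?_
      exact mem_nonZeroDivisors_iff_ne_zero.mp hb (hginj (by simpa using h))
    haveI hEdom : IsDomain (Localization S) := IsLocalization.isDomain_localization hSsub
    have hinjD : Function.Injective (algebraMap D (Localization S)) :=
      IsLocalization.injective _ hSsub
    -- set up the fraction field of B and the algebra structures
    set F := FractionRing B with hFdef
    have hunits : ∀ b : nonZeroDivisors B,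
        IsUnit (((algebraMap D (Localization S)).comp g.toRingHom) b) := by
      intro b
      exact IsLocalization.map_units (Localization S)
        (⟨g b, Submonoid.mem_map_of_mem g.toRingHom b.2⟩ : S)
    set j : F →+* Localization S := IsLocalization.lift hunits with hjdef
    letI : Algebra B (Localization S) :=
      ((algebraMap D (Localization S)).comp g.toRingHom).toAlgebra
    letI : Algebra F (Localization S) := j.toAlgebra
    have halgmapBF : ∀ b : B,
        algebraMap F (Localization S) (algebraMap B F b) = algebraMap B (Localization S) b := by
      intro b
      exact IsLocalization.lift_eq hunits b
    haveI : IsScalarTower B F (Localization S) := IsScalarTower.of_algebraMap_eq'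
      (RingHom.ext fun b => (halgmapBF b).symm)
    -- the localization is not a field
    have hnf : ¬ IsField (Localization S) := by
      intro hf
      letI : Field (Localization S) := hf.toField
      obtain ⟨s, hs⟩ := (inferInstance : Algebra.FiniteType K D).1
      have hmem : ∀ d : D, algebraMap D (Localization S) d ∈
          Algebra.adjoin F ((algebraMap D (Localization S)) '' s) := by
        intro d
        have hd : d ∈ Algebra.adjoin K (s : Set D) := hs ▸ Algebra.mem_top
        refine Algebra.adjoin_induction (fun x hx => ?_) (fun r => ?_)
          (fun x y _ _ hx hy => ?_) (fun x y _ _ hx hy => ?_) hd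
        · exact Algebra.subset_adjoin (Set.mem_image_of_mem _ hx)
        · have h1 : algebraMap K D r = g (C r) := by
            rw [show (C r : B) = algebraMap K B r from rfl, g.commutes]
          rw [h1]
          have h2 : algebraMap D (Localization S) (g (C r)) =
              algebraMap F (Localization S) (algebraMap B F (C r)) := (halgmapBF _).symm
          rw [h2]
          exact Subalgebra.algebraMap_mem _ _
        · rw [map_add]; exact Subalgebra.add_mem _ hx hy
        · rw [map_mul]; exact Subalgebra.mul_mem _ hx hy
      haveI hft : Algebra.FiniteType F (Localization S) := by
        refine ⟨⟨s.image (algebraMap D (Localization S)), le_antisymm le_top ?_⟩⟩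
        rintro x -
        obtain ⟨⟨d, sd⟩, hx⟩ := IsLocalization.surj S x
        obtain ⟨b, hb, hgb⟩ := sd.2
        have hbne : algebraMap B F b ≠ 0 := fun h => mem_nonZeroDivisors_iff_ne_zero.mp hb
          ((IsFractionRing.injective B F) (by simpa using h))
        have hsd : algebraMap D (Localization S) (sd : D) =
            algebraMap F (Localization S) (algebraMap B F b) := by
          rw [← hgb]
          exact (halgmapBF b).symm
        have hone : algebraMap D (Localization S) (sd : D) *
            algebraMap F (Localization S) ((algebraMap B F b)⁻¹) = 1 := by
          rw [hsd, ← map_mul, mul_inv_cancel₀ hbne, map_one]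
        have hx' : x = algebraMap D (Localization S) d *
            algebraMap F (Localization S) ((algebraMap B F b)⁻¹) := by
          calc x = x * (algebraMap D (Localization S) (sd : D) *
              algebraMap F (Localization S) ((algebraMap B F b)⁻¹)) := by rw [hone, mul_one]
          _ = (x * algebraMap D (Localization S) (sd : D)) *
              algebraMap F (Localization S) ((algebraMap B F b)⁻¹) := by ring
          _ = algebraMap D (Localization S) d *
              algebraMap F (Localization S) ((algebraMap B F b)⁻¹) := by rw [hx]
        rw [hx']
        refine Subalgebra.mul_mem _ ?_ (Subalgebra.algebraMap_mem _ _)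
        have := hmem d
        rwa [Finset.coe_image] at *
      haveI : Module.Finite F (Localization S) :=
        finite_of_finite_type_of_isJacobsonRing F (Localization S)
      -- the image of `t 0` is algebraic over `B`
      have halgF : IsAlgebraic F (algebraMap D (Localization S) (t 0)) :=
        (IsIntegral.of_finite F _).isAlgebraic
      have halgB : IsAlgebraic B (algebraMap D (Localization S) (t 0)) :=
        (IsFractionRing.isAlgebraic_iff B F (Localization S)).mpr halgF
      obtain ⟨q, hq0, hqev⟩ := halgB
      have hev : algebraMap D (Localization S) (Polynomial.eval₂ g.toRingHom (t 0) q) = 0 := by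
        rw [Polynomial.hom_eval₂]
        exact hqev
      have hev0 : Polynomial.eval₂ g.toRingHom (t 0) q = 0 := by
        apply hinjD
        rw [hev, map_zero]
      set P : MvPolynomial (Fin (m + 1)) K := (finSuccEquiv K m).symm q with hPdef
      have hP0 : P ≠ 0 := by
        intro h
        apply hq0
        have h2 := congrArg (finSuccEquiv K m) h
        rwa [hPdef, AlgEquiv.apply_symm_apply, map_zero] at h2
      have hPev : aeval t P = 0 := by
        rw [hPdef, aeval_finSuccEquiv_symm]
        exact hev0
      exact hP0 (algebraicIndependent_iff_injective_aeval.mp ht (by rwa [map_zero]))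
    -- extract a nonzero prime of D avoiding the image of nonzero elements of B
    haveI : Nontrivial (Localization S) := by
      refine nontrivial_of_ne 0 1 fun h => ?_
      have := hinjD (show algebraMap D (Localization S) 0 = algebraMap D (Localization S) 1 by
        simpa using h)
      exact zero_ne_one this
    obtain ⟨M, hMne, hMprime⟩ := Ring.not_isField_iff_exists_prime.mp hnf
    set p : Ideal D := M.comap (algebraMap D (Localization S)) with hpdef
    haveI hpprime : p.IsPrime := Ideal.IsPrime.comap _
    have hpne : p ≠ ⊥ := by
      obtain ⟨x, hxM, hx0⟩ := Submodule.exists_mem_ne_zero_of_ne_bot hMne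
      obtain ⟨⟨d, sd⟩, hxd⟩ := IsLocalization.surj S x
      have hdp : d ∈ p := by
        rw [hpdef, Ideal.mem_comap, ← hxd]
        exact Ideal.mul_mem_right _ _ hxM
      have hd0 : d ≠ 0 := by
        rintro rfl
        rw [map_zero] at hxd
        rcases mul_eq_zero.mp hxd with h | h
        · exact hx0 h
        · have hsdne : (sd : D) ≠ 0 := by
            intro h0
            have := hSsub sd.2
            exact mem_nonZeroDivisors_iff_ne_zero.mp this h0
          exact hsdne (hinjD (by rw [h, map_zero]))
      exact fun h => hd0 (by rwa [h, Ideal.mem_bot] at hdp)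
    have hpavoid : ∀ b : B, b ≠ 0 → g b ∉ p := by
      intro b hb hmem
      have hu : IsUnit (algebraMap D (Localization S) (g b)) :=
        IsLocalization.map_units (Localization S)
          (⟨g b, Submonoid.mem_map_of_mem g.toRingHom (mem_nonZeroDivisors_of_ne_zero hb)⟩ : S)
      exact hMprime.ne_top (M.eq_top_of_isUnit_mem (Ideal.mem_comap.mp hmem) hu)
    -- pass to the quotient D ⧸ p and use the inductive hypothesis
    haveI : Algebra.FiniteType K (D ⧸ p) :=
      Algebra.FiniteType.of_surjective (Ideal.Quotient.mkₐ K p)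
        (Ideal.Quotient.mkₐ_surjective K p)
    set t'' : Fin m → D ⧸ p := fun i => Ideal.Quotient.mk p (t i.succ) with ht''def
    have ht'' : AlgebraicIndependent K t'' := by
      rw [algebraicIndependent_iff_injective_aeval]
      have haev : (aeval t'' : MvPolynomial (Fin m) K →ₐ[K] D ⧸ p) =
          (Ideal.Quotient.mkₐ K p).comp g := by
        apply MvPolynomial.algHom_ext
        intro i
        simp [ht''def, hgdef, ht'def]
      rw [haev]
      intro a b hab
      by_contra hne
      have hsub : g (a - b) ∈ p := by
        have h1 : Ideal.Quotient.mk p (g a) = Ideal.Quotient.mk p (g b) := by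
          simpa [Ideal.Quotient.mkₐ_eq_mk] using hab
        rw [map_sub]
        exact Ideal.Quotient.eq.mp h1
      exact hpavoid (a - b) (sub_ne_zero.mpr hne) hsub
    obtain ⟨c', hc'mono, hc'prime, hc'0⟩ := IH (D ⧸ p) t'' ht''
    refine ⟨Fin.cons ⊥ (fun i => (c' i).comap (Ideal.Quotient.mk p)), ?_, ?_, ?_⟩
    · rw [Fin.strictMono_iff_lt_succ]
      intro i
      refine Fin.cases ?_ ?_ i
      · have hple : p ≤ (c' 0).comap (Ideal.Quotient.mk p) := by
          rw [hc'0]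
          intro x hx
          rw [Ideal.mem_comap, Ideal.mem_bot]
          exact Ideal.Quotient.eq_zero_iff_mem.mpr hx
        simpa [Fin.cons_zero, Fin.cons_succ] using
          lt_of_lt_of_le (bot_lt_iff_ne_bot.mpr hpne) hple
      · intro j
        have hlt := hc'mono (Fin.castSucc_lt_succ (i := j))
        have hres : (c' j.castSucc).comap (Ideal.Quotient.mk p) <
            (c' j.succ).comap (Ideal.Quotient.mk p) :=
          lt_of_le_of_ne (Ideal.comap_mono hlt.le)
            (fun h => hlt.ne (Ideal.comap_injective_of_surjective _
              Ideal.Quotient.mk_surjective h))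
        simpa [← Fin.succ_castSucc, Fin.cons_succ] using hres
    · intro i
      refine Fin.cases ?_ ?_ i
      · simpa [Fin.cons_zero] using Ideal.bot_prime
      · intro j
        haveI := hc'prime j
        rw [Fin.cons_succ]
        exact Ideal.IsPrime.comap _
    · simp

end Auxiliary

/-- If `I` is an ideal of `K[x₁,…,xₙ]` and `u` is a subset of the variables
such that the composite map `K[u] → K[x]/I` is injective (equivalently `I ∩ K[u] = 0`), then
the cardinality of `u` is at most the Krull dimension of `K[x]/I`. -/
theorem card_le_krullDim_of_inj
    {K : Type*} [Field K] {n : ℕ} (I : Ideal (MvPolynomial (Fin n) K))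
    (u : Finset (Fin n))
    (hinj : Function.Injective
      ((Ideal.Quotient.mk I).comp
        (rename (fun i : {i // i ∈ u} => (i : Fin n)) :
          MvPolynomial {i // i ∈ u} K →ₐ[K] MvPolynomial (Fin n) K).toRingHom)) :
    (u.card : WithBot ℕ∞) ≤ ringKrullDim (MvPolynomial (Fin n) K ⧸ I) := by
  classical
  set A := MvPolynomial (Fin n) K ⧸ I with hAdef
  haveI : Algebra.FiniteType K A :=
    Algebra.FiniteType.of_surjective (Ideal.Quotient.mkₐ K I)
      (Ideal.Quotient.mkₐ_surjective K I)
  set φ : MvPolynomial {i // i ∈ u} K →ₐ[K] A :=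
    (Ideal.Quotient.mkₐ K I).comp (rename (fun i : {i // i ∈ u} => (i : Fin n))) with hφdef
  have hφ : Function.Injective φ := by
    intro a b h
    apply hinj
    simpa [hφdef, Ideal.Quotient.mkₐ_eq_mk] using h
  obtain ⟨q, hqprime, hqavoid⟩ := exists_prime_avoiding_aux φ.toRingHom hφ
  haveI := hqprime
  set v : {i // i ∈ u} → A ⧸ q := fun i => Ideal.Quotient.mk q (φ (X i)) with hvdef
  have hv : AlgebraicIndependent K v := by
    rw [algebraicIndependent_iff_injective_aeval]
    have haev : (aeval v : MvPolynomial {i // i ∈ u} K →ₐ[K] A ⧸ q) =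
        (Ideal.Quotient.mkₐ K q).comp φ := by
      apply MvPolynomial.algHom_ext
      intro i
      simp [hvdef]
    rw [haev]
    intro a b hab
    by_contra hne
    have hsub : φ (a - b) ∈ q := by
      have h1 : Ideal.Quotient.mk q (φ a) = Ideal.Quotient.mk q (φ b) := by
        simpa [Ideal.Quotient.mkₐ_eq_mk] using hab
      rw [map_sub]
      exact Ideal.Quotient.eq.mp h1
    exact hqavoid (a - b) (sub_ne_zero.mpr hne) hsub
  set e : Fin u.card ≃ {i // i ∈ u} := u.equivFin.symm with hedef
  have hv' : AlgebraicIndependent K (v ∘ e) := hv.comp e e.injective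
  haveI : Algebra.FiniteType K (A ⧸ q) :=
    Algebra.FiniteType.of_surjective (Ideal.Quotient.mkₐ K q)
      (Ideal.Quotient.mkₐ_surjective K q)
  obtain ⟨c, hmono, hprime, -⟩ := exists_prime_chain K u.card (A ⧸ q) (v ∘ e) hv'
  have h1 : (u.card : WithBot ℕ∞) ≤ ringKrullDim (A ⧸ q) := by
    let l : LTSeries (PrimeSpectrum (A ⧸ q)) :=
      ⟨u.card, fun i => ⟨c i, hprime i⟩, fun i => hmono (Fin.castSucc_lt_succ (i := i))⟩
    exact Order.LTSeries.length_le_krullDim l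
  exact h1.trans (ringKrullDim_quotient_le q)
end

section
/- Let $X \subseteq \mathbb{C}^n$ be an algebraic variety, $Y \subseteq \mathrm{Sing}(X)$ a subvariety, $u$ a maximally independent subset of variables for a defining ideal $I_Y$ of $Y$, $J := I(\mathrm{Con}(X)) + I_Y$ in $\mathbb{C}[x,y]$, and $h \in \mathbb{C}[u]$ a nonzero polynomial with $(J : h^\infty) = J\,\mathbb{C}(u)[(x\cup y)\setminus u] \cap \mathbb{C}[x,y]$. Then for every associated prime $P$ of $J$ such that $\dim(\kappa_X(V(P))) < \dim(Y)$, one has $h \in P$; consequently $\kappa_X(V(P)) \subseteq V(h)$. -/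
open MvPolynomial

/-- The Zariski tangent space at `p` of a subset `X ⊆ ℂⁿ`: the vectors annihilated by the
differentials at `p` of all polynomials vanishing on `X`. -/
noncomputable def tangentSpace {n : ℕ} (X : Set (Fin n → ℂ)) (p : Fin n → ℂ) :
    Submodule ℂ (Fin n → ℂ) where
  carrier := {v | ∀ f ∈ vanishingIdeal ℂ X, ∑ i, eval p (pderiv i f) * v i = 0}
  add_mem' := by
    intro a b ha hb f hf
    have h1 := ha f hf
    have h2 := hb f hf
    simp only [Pi.add_apply, mul_add, Finset.sum_add_distrib, h1, h2, add_zero]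
  zero_mem' := by intro f hf; simp
  smul_mem' := by
    intro c v hv f hf
    have h1 := hv f hf
    simp only [Pi.smul_apply, smul_eq_mul]
    calc (∑ i, eval p (pderiv i f) * (c * v i))
        = c * ∑ i, eval p (pderiv i f) * v i := by
          rw [Finset.mul_sum]
          exact Finset.sum_congr rfl fun i _ => by ring
      _ = 0 := by rw [h1, mul_zero]

/-- The dimension of (the Zariski closure of) a subset of `ℂⁿ`: the Krull dimension of its
coordinate ring. -/
noncomputable def dimS {n : ℕ} (S : Set (Fin n → ℂ)) : WithBot ℕ∞ :=
  ringKrullDim (MvPolynomial (Fin n) ℂ ⧸ vanishingIdeal ℂ S)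

/-- The set of regular points of `X`: points of `X` where the Zariski tangent space has
dimension equal to `dim X`. -/
noncomputable def regLocus {n : ℕ} (X : Set (Fin n → ℂ)) : Set (Fin n → ℂ) :=
  {p | p ∈ X ∧ (Module.finrank ℂ (tangentSpace X p) : WithBot ℕ∞) = dimS X}

/-- The singular locus of `X`. -/
noncomputable def singLocus {n : ℕ} (X : Set (Fin n → ℂ)) : Set (Fin n → ℂ) :=
  X \ regLocus X

/-- The conormal space of `X ⊆ ℂⁿ` (taking affine cones over the projective factor):
the Zariski closure in `ℂⁿ × ℂⁿ` of the set of pairs `(p, ζ)` with `p` a regular point of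
`X` and `ζ` vanishing on the tangent space `T_p X`. -/
noncomputable def conormal {n : ℕ} (X : Set (Fin n → ℂ)) : Set ((Fin n ⊕ Fin n) → ℂ) :=
  zeroLocus ℂ (vanishingIdeal ℂ
    {q | (fun i => q (Sum.inl i)) ∈ regLocus X ∧
      ∀ v ∈ tangentSpace X (fun i => q (Sum.inl i)), ∑ i, q (Sum.inr i) * v i = 0})

/-- The conormal map `κ_X`, i.e. the projection `ℂⁿ × ℂⁿ → ℂⁿ` onto the first factor. -/
def conormalProj {n : ℕ} (q : (Fin n ⊕ Fin n) → ℂ) : Fin n → ℂ := fun i => q (Sum.inl i)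

namespace ConAux

variable {n : ℕ}

/-- The image in `ℂ[x]` of the nonzero polynomials in the variables of `v`. -/
noncomputable def subMon (v : Finset (Fin n)) : Submonoid (MvPolynomial (Fin n) ℂ) :=
  Submonoid.map ((rename (Subtype.val : {j // j ∈ v} → Fin n) :
      MvPolynomial {j // j ∈ v} ℂ →ₐ[ℂ] MvPolynomial (Fin n) ℂ) :
        MvPolynomial {j // j ∈ v} ℂ →+* MvPolynomial (Fin n) ℂ).toMonoidHom
    (nonZeroDivisors (MvPolynomial {j // j ∈ v} ℂ))

lemma mem_subMon {v : Finset (Fin n)} {a : MvPolynomial (Fin n) ℂ} :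
    a ∈ subMon v ↔ ∃ g : MvPolynomial {j // j ∈ v} ℂ, g ≠ 0 ∧ rename Subtype.val g = a := by
  simp only [subMon, Submonoid.mem_map]
  constructor
  · rintro ⟨g, hg, rfl⟩
    exact ⟨g, mem_nonZeroDivisors_iff_ne_zero.mp hg, rfl⟩
  · rintro ⟨g, hg, rfl⟩
    exact ⟨g, mem_nonZeroDivisors_iff_ne_zero.mpr hg, rfl⟩

lemma subMon_le_nzd (v : Finset (Fin n)) :
    subMon v ≤ nonZeroDivisors (MvPolynomial (Fin n) ℂ) := by
  intro a ha
  obtain ⟨g, hg, rfl⟩ := mem_subMon.mp ha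
  exact mem_nonZeroDivisors_iff_ne_zero.mpr
    (fun h => hg ((rename_injective _ Subtype.val_injective).eq_iff.mp (by simpa using h)))

lemma exists_prime_avoiding (v : Finset (Fin n)) (I : Ideal (MvPolynomial (Fin n) ℂ))
    (hI : ∀ g : MvPolynomial {j // j ∈ v} ℂ, g ≠ 0 → rename Subtype.val g ∉ I) :
    ∃ p : Ideal (MvPolynomial (Fin n) ℂ), p.IsPrime ∧ I ≤ p ∧
      ∀ g : MvPolynomial {j // j ∈ v} ℂ, g ≠ 0 → rename Subtype.val g ∉ p := by
  set A := MvPolynomial (Fin n) ℂ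
  set S := subMon v
  set L := Localization S
  have hinj : Function.Injective (algebraMap A L) :=
    IsLocalization.injective L (subMon_le_nzd v)
  have hne : I.map (algebraMap A L) ≠ ⊤ := by
    intro htop
    have h1 : (1 : L) ∈ I.map (algebraMap A L) := htop ▸ Submodule.mem_top
    obtain ⟨⟨a, s⟩, h⟩ := (IsLocalization.mem_map_algebraMap_iff S L).mp h1
    rw [one_mul] at h
    have hsa : (s : A) = a := hinj h
    obtain ⟨g, hg, hgs⟩ := mem_subMon.mp s.2
    exact hI g hg (by rw [hgs, hsa]; exact a.2)
  obtain ⟨M, hM, hMle⟩ := Ideal.exists_le_maximal _ hne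
  refine ⟨Ideal.comap (algebraMap A L) M, Ideal.IsPrime.comap _, ?_, ?_⟩
  · intro a ha
    exact Ideal.mem_comap.mpr (hMle (Ideal.mem_map_of_mem _ ha))
  · intro g hg hmem
    have hu : IsUnit (algebraMap A L (rename Subtype.val g)) :=
      IsLocalization.map_units L ⟨_, mem_subMon.mpr ⟨g, hg, rfl⟩⟩
    exact hM.ne_top (M.eq_top_of_isUnit_mem (Ideal.mem_comap.mp hmem) hu)

set_option maxHeartbeats 1000000 in
/-- Core of the induction step, via Zariski's lemma: if `χ : ℂ[x] → F` is a ring hom to a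
field which is injective on `ℂ[v]` (pushed forward by `rename`), and every element of `F` is
a fraction `χ a / χ t` with `t` a nonzero polynomial in the variables `v.erase i`,
then we get a contradiction. -/
lemma zariski_core (v : Finset (Fin n)) (i : Fin n) (hi : i ∈ v) {F : Type}
    [Field F] (χ : MvPolynomial (Fin n) ℂ →+* F)
    (hker : ∀ g : MvPolynomial {j // j ∈ v} ℂ, χ (rename Subtype.val g) = 0 → g = 0)
    (hfrac : ∀ z : F, ∃ a : MvPolynomial (Fin n) ℂ,
      ∃ t : MvPolynomial {j // j ∈ v.erase i} ℂ,
        t ≠ 0 ∧ z * χ (rename Subtype.val t) = χ a) :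
    False := by
  classical
  set τ' := {j // j ∈ v.erase i}
  set B := MvPolynomial τ' ℂ
  let incl : τ' → {j // j ∈ v} := fun j => ⟨j.1, Finset.mem_of_mem_erase j.2⟩
  have hincl : Function.Injective incl := fun a b hab =>
    Subtype.ext (congrArg (fun x => x.1) hab)
  have hvalincl : ∀ g : B, (rename (Subtype.val : {j // j ∈ v} → Fin n)) (rename incl g)
      = rename Subtype.val g := by
    intro g; rw [rename_rename]; rfl
  -- the map `g0 : ℂ[v'] → F g` is injective
  let g0 : B →+* F := χ.comp ((rename (Subtype.val : τ' → Fin n) :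
      B →ₐ[ℂ] MvPolynomial (Fin n) ℂ) : B →+* MvPolynomial (Fin n) ℂ)
  have hg0 : ∀ g : B, g0 g = χ (rename Subtype.val g) := fun g => rfl
  have hg0inj : Function.Injective g0 := by
    rw [injective_iff_map_eq_zero]
    intro g hg
    have := hker (rename incl g) (by rw [hvalincl]; exact hg)
    exact (rename_injective incl hincl).eq_iff.mp (by simpa using this)
  set K := FractionRing B
  let k : K →+* F := IsFractionRing.lift hg0inj
  have hkalg : ∀ b : B, k (algebraMap B K b) = g0 b := fun b =>
    IsFractionRing.lift_algebraMap hg0inj b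
  let ψ : MvPolynomial (Fin n) K →+* F := eval₂Hom k (fun j => χ (X j))
  have hψC : ∀ x : K, ψ (C x) = k x := fun x => eval₂_C _ _ _
  -- ψ ∘ map = χ
  have hψχ : ∀ a : MvPolynomial (Fin n) ℂ, ψ (MvPolynomial.map (algebraMap ℂ K) a) = χ a := by
    intro a
    have h2 : ψ.comp (MvPolynomial.map (algebraMap ℂ K) :
        MvPolynomial (Fin n) ℂ →+* MvPolynomial (Fin n) K) = χ := by
      apply MvPolynomial.ringHom_ext
      · intro c
        have h1 : algebraMap ℂ K c = algebraMap B K (C c) := by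
          rw [IsScalarTower.algebraMap_eq ℂ B K]; rfl
        simp only [RingHom.comp_apply, MvPolynomial.map_C, hψC, h1, hkalg, hg0, rename_C]
      · intro j
        simp only [RingHom.comp_apply, MvPolynomial.map_X, eval₂Hom_X', ψ]
    exact congrFun (congrArg (fun f => f.toFun) h2) a
  -- ψ is surjective
  have hψsurj : Function.Surjective ψ := by
    intro z
    obtain ⟨a, t, ht0, hza⟩ := hfrac z
    have htunit : χ (rename Subtype.val t) ≠ 0 := by
      intro h
      have := hker (rename incl t) (by rw [hvalincl]; exact h)
      exact ht0 ((rename_injective incl hincl).eq_iff.mp (by simpa using this))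
    refine ⟨MvPolynomial.map (algebraMap ℂ K) a * C (algebraMap B K t)⁻¹, ?_⟩
    rw [map_mul, hψχ, hψC, map_inv₀, hkalg, hg0]
    exact ((eq_mul_inv_iff_mul_eq₀ htunit).mpr hza).symm
  -- Zariski's lemma
  have hint : (ψ.comp MvPolynomial.C).IsIntegral :=
    MvPolynomial.comp_C_integral_of_surjective_of_isJacobsonRing ψ hψsurj
  have hψcompC : ψ.comp MvPolynomial.C = k := RingHom.ext fun x => hψC x
  rw [hψcompC] at hint
  -- the image of variable `i` is integral over `K`
  obtain ⟨P, hPmonic, hPeval⟩ := hint (χ (X i))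
  -- clear denominators
  have heval2 : Polynomial.eval₂ (k.comp (algebraMap B K)) (χ (X i))
      (IsLocalization.integerNormalization (nonZeroDivisors B) P) = 0 :=
    IsLocalization.integerNormalization_eval₂_eq_zero (nonZeroDivisors B) k P hPeval
  have hkcomp : k.comp (algebraMap B K) = g0 := RingHom.ext fun b => hkalg b
  rw [hkcomp] at heval2
  set qB := IsLocalization.integerNormalization (nonZeroDivisors B) P with hqB
  have hqB0 : qB ≠ 0 := fun h =>
    hPmonic.ne_zero (IsFractionRing.integerNormalization_eq_zero_iff.mp h)
  -- build the contradiction polynomial G in ℂ[v]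
  let ρincl : B →+* MvPolynomial {j // j ∈ v} ℂ :=
    ((rename incl : B →ₐ[ℂ] MvPolynomial {j // j ∈ v} ℂ) : B →+* MvPolynomial {j // j ∈ v} ℂ)
  set G : MvPolynomial {j // j ∈ v} ℂ := Polynomial.eval₂ ρincl (X ⟨i, hi⟩) qB with hG
  -- χ (rename val G) = 0
  have hXi : (χ.comp ((rename (Subtype.val : {j // j ∈ v} → Fin n) :
      MvPolynomial {j // j ∈ v} ℂ →ₐ[ℂ] MvPolynomial (Fin n) ℂ) :
        MvPolynomial {j // j ∈ v} ℂ →+* MvPolynomial (Fin n) ℂ)) (X ⟨i, hi⟩) = χ (X i) := by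
    simp only [RingHom.comp_apply, AlgHom.coe_toRingHom, rename_X]
  have hGeval : χ (rename Subtype.val G) = 0 := by
    have h4 : (χ.comp ((rename (Subtype.val : {j // j ∈ v} → Fin n) :
        MvPolynomial {j // j ∈ v} ℂ →ₐ[ℂ] MvPolynomial (Fin n) ℂ) :
          MvPolynomial {j // j ∈ v} ℂ →+* MvPolynomial (Fin n) ℂ)) G
        = Polynomial.eval₂ g0 (χ (X i)) qB := by
      rw [hG, Polynomial.hom_eval₂, hXi]
      congr 1
      apply RingHom.ext
      intro b
      simp only [RingHom.comp_apply, AlgHom.coe_toRingHom]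
      rw [show ρincl b = rename incl b from rfl, hvalincl]
      rfl
    rw [heval2] at h4
    exact h4
  -- `G ≠ 0` via the isomorphism `ℂ[v] ≃ ℂ[v'][T]`
  let e : {j // j ∈ v} ≃ Option τ' :=
    { toFun := fun j => if h : (j : Fin n) = i then none else
        some ⟨j.1, Finset.mem_erase.mpr ⟨h, j.2⟩⟩
      invFun := fun o => o.elim ⟨i, hi⟩ incl
      left_inv := by
        intro j
        dsimp only
        by_cases h : (j : Fin n) = i
        · rw [dif_pos h]
          exact Subtype.ext h.symm
        · rw [dif_neg h]
          rfl
      right_inv := by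
        intro o
        match o with
        | none => exact dif_pos rfl
        | some b =>
          have hb : (b : Fin n) ≠ i := (Finset.mem_erase.mp b.2).1
          show (if h : ((incl b) : Fin n) = i then none
            else some ⟨(incl b).1, Finset.mem_erase.mpr ⟨h, (incl b).2⟩⟩) = some b
          rw [dif_neg hb] }
  have he_incl : ∀ j : τ', e (incl j) = some j := by
    intro j
    have hb : (j : Fin n) ≠ i := (Finset.mem_erase.mp j.2).1
    show (if h : _ then _ else _) = _
    rw [dif_neg hb]
  have he_i : e ⟨i, hi⟩ = none := dif_pos rfl
  let Ψ : MvPolynomial {j // j ∈ v} ℂ →+* Polynomial B :=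
    ((optionEquivLeft ℂ τ').toAlgHom :
      MvPolynomial (Option τ') ℂ →ₐ[ℂ] Polynomial B).toRingHom.comp
      ((rename (e : {j // j ∈ v} → Option τ') :
        MvPolynomial {j // j ∈ v} ℂ →ₐ[ℂ] MvPolynomial (Option τ') ℂ) :
          MvPolynomial {j // j ∈ v} ℂ →+* MvPolynomial (Option τ') ℂ)
  have hΨC : Ψ.comp ρincl = (Polynomial.C : B →+* Polynomial B) := by
    apply MvPolynomial.ringHom_ext
    · intro c
      simp only [RingHom.comp_apply, AlgHom.coe_toRingHom]
      rw [show ρincl (C c) = rename incl (C c) from rfl, rename_C]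
      show (optionEquivLeft ℂ τ') ((rename (e : {j // j ∈ v} → Option τ')) (C c)) = _
      rw [rename_C, optionEquivLeft_C]
    · intro j
      simp only [RingHom.comp_apply, AlgHom.coe_toRingHom]
      rw [show ρincl (X j) = rename incl (X j) from rfl, rename_X]
      show (optionEquivLeft ℂ τ') ((rename (e : {j // j ∈ v} → Option τ')) (X (incl j))) = _
      rw [rename_X, he_incl, optionEquivLeft_X_some]
  have hΨX : Ψ (X ⟨i, hi⟩) = Polynomial.X := by
    show (optionEquivLeft ℂ τ') ((rename (e : {j // j ∈ v} → Option τ')) (X ⟨i, hi⟩)) = _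
    rw [rename_X, he_i, optionEquivLeft_X_none]
  have hΨG : Ψ G = qB := by
    rw [hG, Polynomial.hom_eval₂, hΨC, hΨX, Polynomial.eval₂_C_X]
  have hGne : G ≠ 0 := by
    intro h
    rw [h, map_zero] at hΨG
    exact hqB0 hΨG.symm
  exact hGne (hker G hGeval)


lemma exists_prime_step (v : Finset (Fin n)) (i : Fin n) (hi : i ∈ v)
    (p : Ideal (MvPolynomial (Fin n) ℂ)) (hp : p.IsPrime)
    (hinv : ∀ g : MvPolynomial {j // j ∈ v} ℂ, g ≠ 0 → rename Subtype.val g ∉ p) :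
    ∃ q : Ideal (MvPolynomial (Fin n) ℂ), q.IsPrime ∧ p < q ∧
      ∀ g : MvPolynomial {j // j ∈ v.erase i} ℂ, g ≠ 0 → rename Subtype.val g ∉ q := by
  classical
  set A := MvPolynomial (Fin n) ℂ
  set B := MvPolynomial {j // j ∈ v.erase i} ℂ
  let incl : {j // j ∈ v.erase i} → {j // j ∈ v} := fun j => ⟨j.1, Finset.mem_of_mem_erase j.2⟩
  have hincl : Function.Injective incl := fun a b hab =>
    Subtype.ext (congrArg (fun x => x.1) hab)
  have hvalincl : ∀ g : B, (rename (Subtype.val : {j // j ∈ v} → Fin n)) (rename incl g)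
      = rename Subtype.val g := by
    intro g; rw [rename_rename]; rfl
  have h0 : ∀ g : B, g ≠ 0 → (rename Subtype.val g : A) ∉ p := by
    intro g hg hmem
    have hne : rename incl g ≠ 0 := fun h => hg ((rename_injective incl hincl).eq_iff.mp
      (by simpa using h))
    refine hinv (rename incl g) hne ?_
    rwa [hvalincl]
  have hdisj : Disjoint ((subMon (v.erase i) : Submonoid A) : Set A) (p : Set A) := by
    rw [Set.disjoint_left]
    intro a ha hap
    obtain ⟨g, hg, rfl⟩ := mem_subMon.mp ha
    exact h0 g hg hap
  set L := Localization (subMon (v.erase i))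
  set P' := p.map (algebraMap A L) with hP'def
  have hP' : P'.IsPrime := IsLocalization.isPrime_of_isPrime_disjoint (subMon (v.erase i)) L p hp hdisj
  have hcomap : Ideal.comap (algebraMap A L) P' = p :=
    IsLocalization.under_map_of_isPrime_disjoint (subMon (v.erase i)) L hp hdisj
  have hkerχ : ∀ a : A, (Ideal.Quotient.mk P') (algebraMap A L a) = 0 ↔ a ∈ p := by
    intro a
    rw [Ideal.Quotient.eq_zero_iff_mem, ← Ideal.mem_comap, hcomap]
  have hnm : ¬ P'.IsMaximal := by
    intro hmax
    letI : Field (L ⧸ P') := Ideal.Quotient.field P'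
    refine zariski_core v i hi ((Ideal.Quotient.mk P').comp (algebraMap A L)) ?_ ?_
    · intro g hg
      by_contra hne
      exact hinv g hne ((hkerχ _).mp hg)
    · intro z
      obtain ⟨y, rfl⟩ := Ideal.Quotient.mk_surjective z
      obtain ⟨⟨a, s⟩, hys⟩ := IsLocalization.mk'_surjective (subMon (v.erase i)) y
      obtain ⟨t, ht, hts⟩ := mem_subMon.mp s.2
      refine ⟨a, t, ht, ?_⟩
      simp only [RingHom.comp_apply]
      rw [← map_mul]
      congr 1
      rw [hts, ← hys]
      exact IsLocalization.mk'_spec L a s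
  have hne_top : P' ≠ ⊤ := hP'.ne_top
  obtain ⟨M, hM, hMle⟩ := Ideal.exists_le_maximal _ hne_top
  refine ⟨Ideal.comap (algebraMap A L) M, Ideal.IsPrime.comap _, ?_, ?_⟩
  · constructor
    · rw [← hcomap]
      exact Ideal.comap_mono hMle
    · intro hle
      have hqp : Ideal.comap (algebraMap A L) M = p :=
        le_antisymm hle (hcomap ▸ Ideal.comap_mono hMle)
      have : Ideal.map (algebraMap A L) (Ideal.comap (algebraMap A L) M) = M :=
        IsLocalization.map_comap (subMon (v.erase i)) L M
      rw [hqp] at this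
      rw [← this] at hM
      exact hnm hM
  · intro g hg hmem
    have hu : IsUnit (algebraMap A L (rename Subtype.val g)) :=
      IsLocalization.map_units L ⟨_, mem_subMon.mpr ⟨g, hg, rfl⟩⟩
    exact hM.ne_top (M.eq_top_of_isUnit_mem (Ideal.mem_comap.mp hmem) hu)

lemma exists_chain (d : ℕ) : ∀ (v : Finset (Fin n)), v.card = d →
    ∀ (p : Ideal (MvPolynomial (Fin n) ℂ)), ∀ hp : p.IsPrime,
    (∀ g : MvPolynomial {j // j ∈ v} ℂ, g ≠ 0 → rename Subtype.val g ∉ p) →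
    ∃ c : LTSeries (PrimeSpectrum (MvPolynomial (Fin n) ℂ)),
      c.length = d ∧ c.head.asIdeal = p := by
  induction d with
  | zero =>
    intro v hv p hp hinv
    exact ⟨RelSeries.singleton _ ⟨p, hp⟩, rfl, rfl⟩
  | succ d ih =>
    intro v hv p hp hinv
    have hne : v.Nonempty := Finset.card_pos.mp (by omega)
    obtain ⟨i, hi⟩ := hne
    obtain ⟨q, hq, hpq, hqinv⟩ := exists_prime_step v i hi p hp hinv
    have hcard : (v.erase i).card = d := by
      rw [Finset.card_erase_of_mem hi, hv]
      omega
    obtain ⟨c, hlen, hhead⟩ := ih (v.erase i) hcard q hq hqinv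
    have hrel : (⟨p, hp⟩ : PrimeSpectrum (MvPolynomial (Fin n) ℂ)) < c.head := by
      show (⟨p, hp⟩ : PrimeSpectrum (MvPolynomial (Fin n) ℂ)).asIdeal < c.head.asIdeal
      rw [hhead]
      exact hpq
    refine ⟨c.cons ⟨p, hp⟩ hrel, ?_, ?_⟩
    · simp [RelSeries.cons_length, hlen]
    · rfl

lemma dim_ge_card (v : Finset (Fin n)) (I : Ideal (MvPolynomial (Fin n) ℂ))
    (hI : ∀ g : MvPolynomial {j // j ∈ v} ℂ, g ≠ 0 → rename Subtype.val g ∉ I) :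
    (v.card : WithBot ℕ∞) ≤ ringKrullDim (MvPolynomial (Fin n) ℂ ⧸ I) := by
  obtain ⟨p, hp, hIp, hpinv⟩ := exists_prime_avoiding v I hI
  obtain ⟨c, hlen, hhead⟩ := exists_chain v.card v rfl p hp hpinv
  have hmk : Function.Surjective (Ideal.Quotient.mk I) := Ideal.Quotient.mk_surjective
  have hIle : ∀ j : Fin (c.length + 1), I ≤ (c j).asIdeal := by
    intro j
    refine le_trans (le_trans hIp (le_of_eq hhead.symm)) ?_
    exact c.monotone (Fin.zero_le j)
  have hker : ∀ j, RingHom.ker (Ideal.Quotient.mk I) ≤ (c j).asIdeal := by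
    intro j; rw [Ideal.mk_ker]; exact hIle j
  have hprime : ∀ j : Fin (c.length + 1),
      (((c j).asIdeal).map (Ideal.Quotient.mk I)).IsPrime := by
    intro j
    haveI := (c j).isPrime
    exact Ideal.map_isPrime_of_surjective hmk (hker j)
  have hcomapmap : ∀ j, Ideal.comap (Ideal.Quotient.mk I)
      (((c j).asIdeal).map (Ideal.Quotient.mk I)) = (c j).asIdeal := by
    intro j
    rw [Ideal.comap_map_of_surjective _ hmk, ← RingHom.ker_eq_comap_bot,
      sup_eq_left.mpr (hker j)]
  let c' : LTSeries (PrimeSpectrum (MvPolynomial (Fin n) ℂ ⧸ I)) :=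
    LTSeries.mk c.length (fun j => ⟨((c j).asIdeal).map (Ideal.Quotient.mk I), hprime j⟩)
      (by
        intro a b hab
        have h1 : (c a).asIdeal < (c b).asIdeal := c.strictMono hab
        show (((c a).asIdeal).map (Ideal.Quotient.mk I)) < _
        refine lt_of_le_of_ne (Ideal.map_mono (le_of_lt h1)) ?_
        intro heq
        have := congrArg (Ideal.comap (Ideal.Quotient.mk I)) heq
        rw [hcomapmap a, hcomapmap b] at this
        exact (ne_of_lt h1) this)
  have hlen' : (v.card : ℕ) = c'.length := by
    exact hlen.symm
  calc (v.card : WithBot ℕ∞) = (c'.length : WithBot ℕ∞) := by rw [hlen']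
    _ ≤ _ := Order.LTSeries.length_le_krullDim c'

end ConAux

/-- Let `X ⊆ ℂⁿ` be an algebraic variety, `Y ⊆ Sing(X)` a subvariety,
`u` a maximally independent subset of variables for a defining ideal `I_Y` of `Y`,
`J := I(Con(X)) + I_Y ⊆ ℂ[x,y]`, and `0 ≠ h ∈ ℂ[u]` with
`(J : h^∞) = J·ℂ(u)[(x∪y)∖u] ∩ ℂ[x,y]`.  Then for every associated prime `P` of `J` with
`dim κ_X(V(P)) < dim Y` one has `h ∈ P`, and consequently `κ_X(V(P)) ⊆ V(h)`. -/
theorem conormal_associated_primes_low_dimensional_image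
    {n : ℕ} (X Y : Set (Fin n → ℂ))
    (hX : zeroLocus ℂ (vanishingIdeal ℂ X) = X) (hYX : Y ⊆ singLocus X)
    (IY : Ideal (MvPolynomial (Fin n) ℂ)) (hIY : zeroLocus ℂ IY = Y)
    (u : Finset (Fin n)) (h : MvPolynomial {i // i ∈ u} ℂ) (hh : h ≠ 0) :
    -- the inclusion `ℂ[u] → ℂ[x]` and the inclusion `ℂ[u] → ℂ[x,y]`
    let ρ : MvPolynomial {i // i ∈ u} ℂ →+* MvPolynomial (Fin n) ℂ :=
      (rename (fun i : {i // i ∈ u} => (i : Fin n)) :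
        MvPolynomial {i // i ∈ u} ℂ →ₐ[ℂ] MvPolynomial (Fin n) ℂ).toRingHom
    let ρ2 : MvPolynomial {i // i ∈ u} ℂ →+* MvPolynomial (Fin n ⊕ Fin n) ℂ :=
      (rename (fun i : {i // i ∈ u} => (Sum.inl (i : Fin n) : Fin n ⊕ Fin n)) :
        MvPolynomial {i // i ∈ u} ℂ →ₐ[ℂ] MvPolynomial (Fin n ⊕ Fin n) ℂ).toRingHom
    -- `J = I(Con(X)) + I_Y`
    let J : Ideal (MvPolynomial (Fin n ⊕ Fin n) ℂ) :=
      vanishingIdeal ℂ (conormal X) +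
        Ideal.map (rename (Sum.inl : Fin n → Fin n ⊕ Fin n) :
          MvPolynomial (Fin n) ℂ →ₐ[ℂ] MvPolynomial (Fin n ⊕ Fin n) ℂ).toRingHom IY
    -- the multiplicative set `ℂ[u] ∖ {0}` inside `ℂ[x,y]`
    let S : Submonoid (MvPolynomial (Fin n ⊕ Fin n) ℂ) :=
      Submonoid.map ρ2.toMonoidHom (nonZeroDivisors (MvPolynomial {i // i ∈ u} ℂ))
    -- `u` is a maximally independent subset of variables for `I_Y`
    (∀ g : MvPolynomial {i // i ∈ u} ℂ, ρ g ∈ IY → g = 0) →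
    (u.card : WithBot ℕ∞) = ringKrullDim (MvPolynomial (Fin n) ℂ ⧸ IY) →
    -- `(J : h^∞) = J·ℂ(u)[(x∪y)∖u] ∩ ℂ[x,y]`
    satIdeal J (ρ2 h) =
      Ideal.comap (algebraMap (MvPolynomial (Fin n ⊕ Fin n) ℂ) (Localization S))
        (Ideal.map (algebraMap (MvPolynomial (Fin n ⊕ Fin n) ℂ) (Localization S)) J) →
    ∀ P ∈ associatedPrimes (MvPolynomial (Fin n ⊕ Fin n) ℂ)
        (MvPolynomial (Fin n ⊕ Fin n) ℂ ⧸ J),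
      dimS (conormalProj '' zeroLocus ℂ P) < dimS Y →
        ρ2 h ∈ P ∧ conormalProj '' zeroLocus ℂ P ⊆ zeroLocus ℂ (Ideal.span {ρ h}) := by
  intro ρ ρ2 J S hmaxind hdim hsat P hP hlt
  have hPprime : P.IsPrime := hP.1
  -- evaluation compatibility: for `x ∈ ℂ^{2n}`, `eval x (ρ2 g) = eval (conormalProj x) (ρ g)`
  have hevalcomp : ∀ (g : MvPolynomial {i // i ∈ u} ℂ) (x : (Fin n ⊕ Fin n) → ℂ),
      eval x (ρ2 g) = eval (conormalProj x) (ρ g) := by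
    intro g x
    show eval x (rename (fun i : {i // i ∈ u} => (Sum.inl (i : Fin n) : Fin n ⊕ Fin n)) g) = _
    rw [eval_rename]
    show _ = eval (conormalProj x) (rename (fun i : {i // i ∈ u} => (i : Fin n)) g)
    rw [eval_rename]
    rfl
  -- Step 1: find a nonzero `g ∈ ℂ[u]` with `ρ2 g ∈ P`
  have key : ∃ g : MvPolynomial {i // i ∈ u} ℂ, g ≠ 0 ∧ ρ2 g ∈ P := by
    by_contra hcon
    push_neg at hcon
    have hinv : ∀ g : MvPolynomial {i // i ∈ u} ℂ, g ≠ 0 →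
        rename Subtype.val g ∉ vanishingIdeal ℂ (conormalProj '' zeroLocus ℂ P) := by
      intro g hg hmem
      refine hcon g hg ?_
      have h1 : ρ2 g ∈ vanishingIdeal ℂ (zeroLocus ℂ P) := by
        rw [mem_vanishingIdeal_iff]
        intro x hx
        rw [aeval_eq_eval, hevalcomp g x]
        exact hmem (conormalProj x) ⟨x, hx, rfl⟩
      rwa [vanishingIdeal_zeroLocus_eq_radical, hPprime.radical] at h1
    have hge := ConAux.dim_ge_card u (vanishingIdeal ℂ (conormalProj '' zeroLocus ℂ P)) hinv
    have hY : dimS Y ≤ (u.card : WithBot ℕ∞) := by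
      rw [hdim]
      have hle : IY ≤ vanishingIdeal ℂ Y := by
        rw [← hIY, vanishingIdeal_zeroLocus_eq_radical]
        exact Ideal.le_radical
      have hsurj : Function.Surjective (Ideal.Quotient.factor hle) := by
        intro z
        obtain ⟨x, rfl⟩ := Ideal.Quotient.mk_surjective z
        exact ⟨Ideal.Quotient.mk IY x, Ideal.Quotient.factor_mk hle x⟩
      exact ringKrullDim_le_of_surjective _ hsurj
    exact absurd hlt (not_lt.mpr (le_trans hY hge))
  obtain ⟨g, hg0, hgP⟩ := key
  -- Step 2: `ρ2 h ∈ P` via the saturation hypothesis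
  obtain ⟨-, x, hx⟩ := isAssociatedPrime_iff.mp hP
  obtain ⟨m, rfl⟩ := Ideal.Quotient.mk_surjective x
  have hmemP : ∀ f : MvPolynomial (Fin n ⊕ Fin n) ℂ, f ∈ P ↔ f * m ∈ J := by
    intro f
    rw [hx, Submodule.mem_colon_singleton, Submodule.mem_bot]
    have h1 : f • (Ideal.Quotient.mk J m) = Ideal.Quotient.mk J (f * m) := rfl
    rw [h1, Ideal.Quotient.eq_zero_iff_mem]
  have hgm : ρ2 g * m ∈ J := (hmemP _).mp hgP
  have hmemS : ρ2 g ∈ S := ⟨g, mem_nonZeroDivisors_iff_ne_zero.mpr hg0, rfl⟩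
  have hu : IsUnit (algebraMap (MvPolynomial (Fin n ⊕ Fin n) ℂ) (Localization S) (ρ2 g)) :=
    IsLocalization.map_units (Localization S) ⟨ρ2 g, hmemS⟩
  have hmloc : algebraMap (MvPolynomial (Fin n ⊕ Fin n) ℂ) (Localization S) m ∈
      J.map (algebraMap (MvPolynomial (Fin n ⊕ Fin n) ℂ) (Localization S)) := by
    have h1 := Ideal.mem_map_of_mem
      (algebraMap (MvPolynomial (Fin n ⊕ Fin n) ℂ) (Localization S)) hgm
    rw [map_mul] at h1
    have h2 := Ideal.mul_mem_left _ (↑hu.unit⁻¹) h1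
    rwa [← mul_assoc, IsUnit.val_inv_mul, one_mul] at h2
  have hmsat : m ∈ satIdeal J (ρ2 h) := by
    rw [hsat]
    exact Ideal.mem_comap.mpr hmloc
  obtain ⟨kk, hkk⟩ := hmsat
  have hpow : (ρ2 h) ^ kk ∈ P := (hmemP _).mpr hkk
  have hhP : ρ2 h ∈ P := hPprime.mem_of_pow_mem kk hpow
  refine ⟨hhP, ?_⟩
  -- Step 3: the zero locus inclusion
  rintro y ⟨x, hxP, rfl⟩
  rw [mem_zeroLocus_iff]
  intro f hf
  rw [Ideal.mem_span_singleton] at hf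
  obtain ⟨c, rfl⟩ := hf
  rw [map_mul]
  have h1 : eval (conormalProj x) (ρ h) = 0 := by
    rw [← hevalcomp h x]
    exact hxP _ hhP
  rw [aeval_eq_eval, show (eval (conormalProj x)) (ρ h) = 0 from h1, zero_mul]
end
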